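/- Generically, nonexpansive mappings almost have fixed points: the set G := {T : X → X nonexpansive : 0 belongs to the norm closure of the range of Id − T, i.e., for every ε > 0 there is x ∈ X with ‖x − Tx‖ < ε} is a dense G_δ in (N(X), ρ): there exists a sequence (O_n) of subsets of N(X), each ρ-open in N(X) and ρ-dense in N(X), with G = ⋂_n O_n. -/

import Mathlib

open RealInnerProductSpace Filter

variable {X : Type*} [NormedAddCommGroup X] [InnerProductSpace ℝ X] [CompleteSpace X]

/-- `T` is nonexpansive. -/
def Nonexpansive (T : X → X) : Prop := ∀ x y : X, ‖T x - T y‖ ≤ ‖x - y‖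

/-- `T` is firmly nonexpansive. -/
def FirmlyNonexpansive (T : X → X) : Prop :=
  ∀ x y : X, ‖T x - T y‖ ^ 2 ≤ ⟪x - y, T x - T y⟫

/-- `‖T₁ - T₂‖ₙ = sup_{‖x‖ ≤ n} ‖T₁ x - T₂ x‖`. -/
noncomputable def ballSup (T₁ T₂ : X → X) (n : ℕ) : ℝ :=
  sSup {r : ℝ | ∃ x : X, ‖x‖ ≤ (n : ℝ) ∧ r = ‖T₁ x - T₂ x‖}

/-- The metric `ρ` on nonexpansive maps. -/
noncomputable def rho (T₁ T₂ : X → X) : ℝ :=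
  ∑' n : ℕ, (1 / 2 ^ (n + 1)) *
    (ballSup T₁ T₂ (n + 1) / (1 + ballSup T₁ T₂ (n + 1)))

/-- The metric `ρ̂` on firmly nonexpansive maps: `ρ̂(T₁,T₂) = ρ(2T₁ - Id, 2T₂ - Id)`. -/
noncomputable def rhoHat (T₁ T₂ : X → X) : ℝ :=
  rho (fun x => (2 : ℝ) • T₁ x - x) (fun x => (2 : ℝ) • T₂ x - x)

/-- `T` is super-regular with limit point `xT`. -/
def SuperRegularAt (T : X → X) (xT : X) : Prop :=
  ∀ s : ℝ, 0 < s → ∀ ε : ℝ, 0 < ε → ∃ N : ℕ, ∀ n ≥ N, ∀ x : X, ‖x‖ ≤ s → ‖T^[n] x - xT‖ < ε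

/-- `T` is super-regular. -/
def SuperRegular (T : X → X) : Prop := ∃ xT : X, SuperRegularAt T xT

/-- `T` is a (Banach) contraction. -/
def Contraction (T : X → X) : Prop :=
  ∃ l : ℝ, 0 ≤ l ∧ l < 1 ∧ ∀ x y : X, ‖T x - T y‖ ≤ l * ‖x - y‖

lemma ballSup_set_nonempty (S T : X → X) (n : ℕ) :
    {r : ℝ | ∃ x : X, ‖x‖ ≤ (n : ℝ) ∧ r = ‖S x - T x‖}.Nonempty :=
  ⟨‖S 0 - T 0‖, 0, by simp, rfl⟩

lemma ballSup_bddAbove {S T : X → X} (hS : Nonexpansive S) (hT : Nonexpansive T) (n : ℕ) :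
    BddAbove {r : ℝ | ∃ x : X, ‖x‖ ≤ (n : ℝ) ∧ r = ‖S x - T x‖} := by
  refine ⟨2 * n + ‖S 0 - T 0‖, ?_⟩
  rintro r ⟨x, hx, rfl⟩
  have h1 : ‖S x - T x‖ ≤ ‖S x - S 0‖ + ‖S 0 - T 0‖ + ‖T 0 - T x‖ := by
    have := dist_triangle4 (S x) (S 0) (T 0) (T x)
    simpa [dist_eq_norm] using this
  have h2 : ‖S x - S 0‖ ≤ ‖x‖ := by simpa using hS x 0
  have h3 : ‖T 0 - T x‖ ≤ ‖x‖ := by simpa [norm_sub_rev] using hT 0 x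
  linarith

lemma le_ballSup {S T : X → X} (hS : Nonexpansive S) (hT : Nonexpansive T) {n : ℕ} {x : X}
    (hx : ‖x‖ ≤ (n : ℝ)) : ‖S x - T x‖ ≤ ballSup S T n :=
  le_csSup (ballSup_bddAbove hS hT n) ⟨x, hx, rfl⟩

lemma ballSup_nonneg {S T : X → X} (hS : Nonexpansive S) (hT : Nonexpansive T) (n : ℕ) :
    0 ≤ ballSup S T n :=
  le_trans (norm_nonneg _) (le_ballSup hS hT (x := 0) (by simp))

lemma ballSup_le {S T : X → X} (hS : Nonexpansive S) (hT : Nonexpansive T) {n : ℕ} {C : ℝ}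
    (h : ∀ x : X, ‖x‖ ≤ (n : ℝ) → ‖S x - T x‖ ≤ C) : ballSup S T n ≤ C := by
  refine csSup_le (ballSup_set_nonempty S T n) ?_
  rintro r ⟨x, hx, rfl⟩; exact h x hx

lemma rho_term_nonneg {S T : X → X} (hS : Nonexpansive S) (hT : Nonexpansive T) (n : ℕ) :
    0 ≤ (1 / 2 ^ (n + 1) : ℝ) *
      (ballSup S T (n + 1) / (1 + ballSup S T (n + 1))) := by
  have h := ballSup_nonneg hS hT (n + 1)
  positivity

lemma rho_term_le {S T : X → X} (hS : Nonexpansive S) (hT : Nonexpansive T) (n : ℕ) :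
    (1 / 2 ^ (n + 1) : ℝ) * (ballSup S T (n + 1) / (1 + ballSup S T (n + 1)))
      ≤ (1 / 2 : ℝ) ^ (n + 1) := by
  have h := ballSup_nonneg hS hT (n + 1)
  have hfrac : ballSup S T (n + 1) / (1 + ballSup S T (n + 1)) ≤ 1 := by
    rw [div_le_one (by linarith)]; linarith
  calc (1 / 2 ^ (n + 1) : ℝ) * (ballSup S T (n + 1) / (1 + ballSup S T (n + 1)))
      ≤ (1 / 2 ^ (n + 1) : ℝ) * 1 := by
        apply mul_le_mul_of_nonneg_left hfrac; positivity
    _ = (1 / 2 : ℝ) ^ (n + 1) := by rw [mul_one, one_div, one_div, inv_pow]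

lemma rho_summable {S T : X → X} (hS : Nonexpansive S) (hT : Nonexpansive T) :
    Summable (fun n : ℕ => (1 / 2 ^ (n + 1) : ℝ) *
      (ballSup S T (n + 1) / (1 + ballSup S T (n + 1)))) := by
  refine Summable.of_nonneg_of_le (rho_term_nonneg hS hT) (rho_term_le hS hT) ?_
  exact (summable_geometric_two).comp_injective (add_left_injective 1)

/-- generically, nonexpansive maps almost have fixed points. -/
theorem generic_almost_fixedPoint :
    ∃ O : ℕ → Set (X → X),
      (∀ n, O n ⊆ {T : X → X | Nonexpansive T}) ∧
      (∀ n, ∀ T ∈ O n, ∃ r > (0 : ℝ), ∀ S : X → X, Nonexpansive S → rho S T < r → S ∈ O n) ∧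
      (∀ n, ∀ T : X → X, Nonexpansive T → ∀ ε : ℝ, 0 < ε → ∃ S ∈ O n, rho S T < ε) ∧
      (⋂ n, O n) = {T : X → X | Nonexpansive T ∧
        ∀ ε : ℝ, 0 < ε → ∃ x : X, ‖x - T x‖ < ε} := by
  refine ⟨fun n => {T : X → X | Nonexpansive T ∧ ∃ x : X, ‖x - T x‖ < 1 / (n + 1)},
    fun n T hT => hT.1, ?_, ?_, ?_⟩
  · -- openness
    rintro n T ⟨hT, x, hx⟩
    set ε' : ℝ := 1 / (n + 1) - ‖x - T x‖ with hε'
    have hε'pos : 0 < ε' := sub_pos.mpr hx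
    set m : ℕ := ⌈‖x‖⌉₊ with hm
    have hxm : ‖x‖ ≤ ((m + 1 : ℕ) : ℝ) := by
      push_cast
      exact le_trans (Nat.le_ceil _) (by linarith)
    refine ⟨(1 / 2 ^ (m + 1)) * (ε' / (1 + ε')), by positivity, ?_⟩
    intro S hSne hrho
    have hterm : (1 / 2 ^ (m + 1) : ℝ) *
        (ballSup S T (m + 1) / (1 + ballSup S T (m + 1))) ≤ rho S T :=
      Summable.le_tsum (rho_summable hSne hT) m (fun j _ => rho_term_nonneg hSne hT j)
    have hlt : ballSup S T (m + 1) / (1 + ballSup S T (m + 1)) < ε' / (1 + ε') := by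
      have h2 : (0:ℝ) < 1 / 2 ^ (m + 1) := by positivity
      have := lt_of_le_of_lt hterm hrho
      exact lt_of_mul_lt_mul_left this (le_of_lt h2)
    have hb : 0 ≤ ballSup S T (m + 1) := ballSup_nonneg hSne hT _
    have hblt : ballSup S T (m + 1) < ε' := by
      rw [div_lt_div_iff₀ (by linarith) (by linarith)] at hlt
      nlinarith
    refine ⟨hSne, x, ?_⟩
    have h4 : ‖x - S x‖ ≤ ‖x - T x‖ + ‖T x - S x‖ := by
      have := dist_triangle x (T x) (S x)
      simpa [dist_eq_norm] using this
    have h5 : ‖T x - S x‖ ≤ ballSup S T (m + 1) := by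
      rw [norm_sub_rev]; exact le_ballSup hSne hT hxm
    have h6 : ‖x - S x‖ < ‖x - T x‖ + ε' := by linarith
    rw [hε'] at h6
    linarith
  · -- density
    intro n T hT ε hε
    set t : ℝ := min (1/2) (ε / 4) with ht
    have htpos : 0 < t := by
      apply lt_min <;> [norm_num; positivity]
    have ht1 : t < 1 := lt_of_le_of_lt (min_le_left _ _) (by norm_num)
    set S : X → X := fun x => (1 - t) • (T x - T 0) + T 0 with hSdef
    have hSsub : ∀ x y : X, S x - S y = (1 - t) • (T x - T y) := by
      intro x y
      simp only [hSdef, smul_sub]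
      abel
    have hSlip : ∀ x y : X, ‖S x - S y‖ ≤ (1 - t) * ‖x - y‖ := by
      intro x y
      rw [hSsub, norm_smul, Real.norm_eq_abs, abs_of_nonneg (by linarith)]
      exact mul_le_mul_of_nonneg_left (hT x y) (by linarith)
    have hSne : Nonexpansive S := fun x y =>
      le_trans (hSlip x y) (by nlinarith [norm_nonneg (x - y)])
    -- fixed point of contraction S
    have hK : (0:ℝ) ≤ 1 - t := by linarith
    have hcon : ContractingWith ⟨1 - t, hK⟩ S := by
      constructor
      · exact_mod_cast show (1 - t : ℝ) < 1 by linarith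
      · apply LipschitzWith.of_dist_le_mul
        intro x y
        rw [dist_eq_norm, dist_eq_norm]; exact hSlip x y
    have : Nonempty X := ⟨0⟩
    set x₀ := hcon.fixedPoint with hx₀def
    have hx₀ : Function.IsFixedPt S x₀ := hcon.fixedPoint_isFixedPt
    have hfix : ‖x₀ - S x₀‖ = 0 := by rw [hx₀]; simp
    refine ⟨S, ⟨hSne, x₀, by rw [hfix]; positivity⟩, ?_⟩
    -- rho S T < ε
    have hbound : ∀ k : ℕ, ballSup S T k ≤ t * k := by
      intro k
      apply ballSup_le hSne hT
      intro x hx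
      have : S x - T x = (-t) • (T x - T 0) := by
        simp only [hSdef]; rw [sub_smul, one_smul, neg_smul]; abel
      rw [this, norm_smul, Real.norm_eq_abs, abs_neg, abs_of_nonneg (le_of_lt htpos)]
      exact mul_le_mul_of_nonneg_left (le_trans (hT x 0) (by simpa using hx))
        (le_of_lt htpos)
    have hsum2 : Summable (fun k : ℕ => ((k:ℝ)) * (1/2)^k) := by
      simpa using summable_pow_mul_geometric_of_norm_lt_one 1 (by norm_num : ‖(1/2:ℝ)‖ < 1)
    have hsumRHS : Summable (fun k : ℕ => t * (((k:ℝ)+1) * (1/2)^(k+1))) := by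
      apply Summable.mul_left
      have := hsum2
      rw [← summable_nat_add_iff 1] at this
      simpa using this
    have hle : ∀ k : ℕ, (1 / 2 ^ (k + 1) : ℝ) *
        (ballSup S T (k + 1) / (1 + ballSup S T (k + 1)))
        ≤ t * (((k:ℝ)+1) * (1/2)^(k+1)) := by
      intro k
      have hb := ballSup_nonneg hSne hT (k + 1)
      have hfrac : ballSup S T (k+1) / (1 + ballSup S T (k+1)) ≤ ballSup S T (k+1) :=
        div_le_self hb (by linarith)
      have h1 : ballSup S T (k+1) / (1 + ballSup S T (k+1)) ≤ t * ((k:ℝ)+1) := by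
        refine le_trans hfrac (le_trans (hbound (k+1)) ?_)
        push_cast; exact le_refl _
      calc (1 / 2 ^ (k + 1) : ℝ) * (ballSup S T (k+1) / (1 + ballSup S T (k+1)))
          ≤ (1 / 2 ^ (k + 1) : ℝ) * (t * ((k:ℝ)+1)) := by
            apply mul_le_mul_of_nonneg_left h1; positivity
        _ = t * (((k:ℝ)+1) * (1/2)^(k+1)) := by
            rw [one_div, ← inv_pow]; ring
    have hrho_le : rho S T ≤ ∑' k : ℕ, t * (((k:ℝ)+1) * (1/2)^(k+1)) :=
      Summable.tsum_le_tsum hle (rho_summable hSne hT) hsumRHS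
    have hval : ∑' k : ℕ, t * (((k:ℝ)+1) * (1/2)^(k+1)) = 2 * t := by
      rw [tsum_mul_left]
      have h0 : ∑' k : ℕ, ((k:ℝ)) * (1/2)^k = 2 := by
        rw [tsum_coe_mul_geometric_of_norm_lt_one (by norm_num : ‖(1/2:ℝ)‖ < 1)]
        norm_num
      have hshift : ∑' k : ℕ, ((k:ℝ)) * (1/2)^k
          = (0:ℝ) * (1/2)^0 + ∑' k : ℕ, (((k:ℝ)+1)) * (1/2)^(k+1) := by
        have := Summable.tsum_eq_zero_add hsum2
        simpa using this
      have : ∑' k : ℕ, (((k:ℝ)+1)) * (1/2)^(k+1) = 2 := by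
        rw [h0] at hshift; linarith [hshift]
      rw [this]; ring
    have : rho S T ≤ 2 * t := hval ▸ hrho_le
    have : rho S T ≤ ε / 2 := le_trans this (by
      have := min_le_right (1/2 : ℝ) (ε / 4)
      have : t ≤ ε / 4 := this
      linarith)
    linarith
  · -- intersection
    ext T
    simp only [Set.mem_iInter, Set.mem_setOf_eq]
    constructor
    · intro h
      refine ⟨(h 0).1, fun ε hε => ?_⟩
      obtain ⟨n, hn⟩ := exists_nat_one_div_lt hε
      obtain ⟨x, hx⟩ := (h n).2
      exact ⟨x, lt_trans hx hn⟩
    · rintro ⟨hT, h⟩ n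
      exact ⟨hT, h (1 / (n + 1)) (by positivity)⟩
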